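/- Under the conditions sign(λ_j)=sign(λ₁) for all j and ‖λ‖₂² → ∞ with |λ₁|‖λ‖₁/‖λ‖₂² → 1 as J → ∞, the sum Σ_j w_j λ_j = σ² λ₁ ‖λ‖₂² / (1 + σ² ‖λ‖₂²) → λ₁, i.e. the weighted combination of donor loadings recovers the treated loading in the limit. -/
import Mathlib


open Filter

/-- Under the sign condition and `‖λ‖₂² → ∞` with `|λ₁|‖λ‖₁/‖λ‖₂² → 1`, the sum
`Σ_j w_j λ_j = σ²λ₁‖λ‖₂²/(1+σ²‖λ‖₂²)` converges to `λ₁`: the weighted donor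
loadings recover the treated loading in the limit. -/
theorem weighted_loadings_recover_treated (σ lam1 : ℝ) (hσ : 0 < σ)
    (lam : (J : ℕ) → Fin J → ℝ)
    (hsign : ∀ J j, Real.sign (lam J j) = Real.sign lam1)
    (hnorm : Tendsto (fun J => ∑ j, (lam J j) ^ 2) atTop atTop)
    (hratio : Tendsto
      (fun J => |lam1| * (∑ j, |lam J j|) / (∑ j, (lam J j) ^ 2)) atTop (nhds 1))
    (w : (J : ℕ) → Fin J → ℝ)
    (hw : ∀ J j, w J j = σ ^ 2 * lam1 * lam J j / (1 + σ ^ 2 * ∑ i, (lam J i) ^ 2)) :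
    (∀ J, ∑ j, w J j * lam J j =
      σ ^ 2 * lam1 * (∑ j, (lam J j) ^ 2) / (1 + σ ^ 2 * ∑ j, (lam J j) ^ 2)) ∧
    Tendsto (fun J => ∑ j, w J j * lam J j) atTop (nhds lam1) := by
  have hsum : ∀ J, ∑ j, w J j * lam J j =
      σ ^ 2 * lam1 * (∑ j, (lam J j) ^ 2) / (1 + σ ^ 2 * ∑ j, (lam J j) ^ 2) := by
    intro J
    rw [Finset.mul_sum, Finset.sum_div]
    refine Finset.sum_congr rfl fun j _ => ?_
    rw [hw]
    ring
  refine ⟨hsum, ?_⟩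
  have hD : Tendsto (fun J => 1 + σ ^ 2 * ∑ j, (lam J j) ^ 2) atTop atTop := by
    exact tendsto_atTop_add_const_left _ 1
      (hnorm.const_mul_atTop (by positivity))
  have hinv : Tendsto (fun J => (1 + σ ^ 2 * ∑ j, (lam J j) ^ 2)⁻¹) atTop (nhds 0) :=
    hD.inv_tendsto_atTop
  have key : Tendsto (fun J => σ ^ 2 * lam1 * (∑ j, (lam J j) ^ 2) /
      (1 + σ ^ 2 * ∑ j, (lam J j) ^ 2)) atTop (nhds lam1) := by
    have hev : ∀ᶠ J in atTop, σ ^ 2 * lam1 * (∑ j, (lam J j) ^ 2) /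
        (1 + σ ^ 2 * ∑ j, (lam J j) ^ 2)
        = lam1 * (1 - (1 + σ ^ 2 * ∑ j, (lam J j) ^ 2)⁻¹) := by
      filter_upwards [hD.eventually_gt_atTop 0] with J hJ
      have hne : (1 + σ ^ 2 * ∑ j, (lam J j) ^ 2) ≠ 0 := ne_of_gt hJ
      field_simp
      ring
    rw [Filter.tendsto_congr' hev]
    have : Tendsto (fun J => lam1 * (1 - (1 + σ ^ 2 * ∑ j, (lam J j) ^ 2)⁻¹))
        atTop (nhds (lam1 * (1 - 0))) :=
      (tendsto_const_nhds.sub hinv).const_mul lam1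
    simpa using this
  exact key.congr fun J => (hsum J).symm
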